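/- arXiv:1007.3919 — 3 statements merged into one kernel-verified Lean document; each statement's English description precedes it below -/
import Mathlib

section
/- Let n ≥ 1, 0 < α ≤ 1/2, 0 < γ < ω < 2α, 0 < r < 1, K > 0, 0 < c₀ < 1 and s₀, s₁ ≥ 0. Set G₀ = r + K s₀ and G₁ = G₀ + G₀^{1+γ−ω} (r^{2α(n+γ)/(n+ω)} + c₀ s₀)^{−1/(2α)} K s₁, and assume G₁ ≤ 1. There exists a constant C depending only on n such that every measurable function ψ : ℝ^n → ℝ satisfying, for some point x* ∈ ℝ^n, the concentration condition ∫_{ℝ^n} |ψ(x)| |x − x*|^ω dx ≤ G₁^{ω−γ} and the height condition ‖ψ‖_{L^∞} ≤ (r^{2α(n+γ)/(n+ω)} + c₀(s₀+s₁))^{−(n+ω)/(2α)} also satisfies ‖ψ‖_{L^1} ≤ C (r^{2α(n+γ)/(n+ω)} + c₀(s₀+s₁))^{−ω/(2α)}. -/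
open MeasureTheory

set_option maxHeartbeats 1000000 in
theorem second_L1_estimate_evolved_molecule (n : ℕ) (hn : 1 ≤ n) :
    ∃ C : ℝ, 0 < C ∧
      ∀ (α γ ω r K c₀ s₀ s₁ : ℝ) (xs : EuclideanSpace ℝ (Fin n))
        (ψ : EuclideanSpace ℝ (Fin n) → ℝ),
        Measurable ψ →
        0 < α → α ≤ 1 / 2 → 0 < γ → γ < ω → ω < 2 * α →
        0 < r → r < 1 → 0 < K → 0 < c₀ → c₀ < 1 → 0 ≤ s₀ → 0 ≤ s₁ →
        (r + K * s₀) +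
            (r + K * s₀) ^ (1 + γ - ω) *
              (r ^ (2 * α * ((n : ℝ) + γ) / ((n : ℝ) + ω)) + c₀ * s₀) ^ (-(1 / (2 * α))) *
              (K * s₁) ≤ 1 →
        (∫⁻ x : EuclideanSpace ℝ (Fin n),
            ENNReal.ofReal (|ψ x| * ‖x - xs‖ ^ ω) ≤
          ENNReal.ofReal (((r + K * s₀) +
            (r + K * s₀) ^ (1 + γ - ω) *
              (r ^ (2 * α * ((n : ℝ) + γ) / ((n : ℝ) + ω)) + c₀ * s₀) ^ (-(1 / (2 * α))) *
              (K * s₁)) ^ (ω - γ))) →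
        (∀ᵐ x : EuclideanSpace ℝ (Fin n) ∂volume,
          |ψ x| ≤ (r ^ (2 * α * ((n : ℝ) + γ) / ((n : ℝ) + ω)) + c₀ * (s₀ + s₁)) ^
            (-(((n : ℝ) + ω) / (2 * α)))) →
        ∫⁻ x : EuclideanSpace ℝ (Fin n), ENNReal.ofReal |ψ x| ≤
          ENNReal.ofReal (C * (r ^ (2 * α * ((n : ℝ) + γ) / ((n : ℝ) + ω)) + c₀ * (s₀ + s₁)) ^
            (-(ω / (2 * α)))) := by
  set V : ENNReal := volume (Metric.ball (0 : EuclideanSpace ℝ (Fin n)) 1) with hV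
  have hVlt : V < ⊤ := measure_ball_lt_top
  refine ⟨V.toReal + 1, by positivity, ?_⟩
  intro α γ ω r K c₀ s₀ s₁ xs ψ hψ hα hα2 hγ hγω hω2α hr hr1 hK hc₀ hc₀1 hs₀ hs₁ hG₁ hconc hht
  have h2α : (0:ℝ) < 2 * α := by linarith
  set e : ℝ := 2 * α * ((n : ℝ) + γ) / ((n : ℝ) + ω) with he
  set A : ℝ := r ^ e + c₀ * (s₀ + s₁) with hA
  have hApos : 0 < A := by
    have := Real.rpow_pos_of_pos hr e
    nlinarith [mul_nonneg hc₀.le (add_nonneg hs₀ hs₁)]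
  set ρ : ℝ := A ^ (1 / (2 * α)) with hρ
  have hρpos : 0 < ρ := Real.rpow_pos_of_pos hApos _
  set B : ℝ := A ^ (-(ω / (2 * α))) with hB
  have hBpos : 0 < B := Real.rpow_pos_of_pos hApos _
  set G₁ : ℝ := (r + K * s₀) +
      (r + K * s₀) ^ (1 + γ - ω) * (r ^ e + c₀ * s₀) ^ (-(1 / (2 * α))) * (K * s₁) with hG
  have hG₁pos : 0 < G₁ := by
    have h1 : (0:ℝ) < r + K * s₀ := by nlinarith
    have h2 : 0 ≤ (r + K * s₀) ^ (1 + γ - ω) * (r ^ e + c₀ * s₀) ^ (-(1 / (2 * α))) * (K * s₁) := by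
      apply mul_nonneg (mul_nonneg (Real.rpow_nonneg h1.le _) ?_) (by nlinarith)
      have : (0:ℝ) < r ^ e + c₀ * s₀ := by
        have := Real.rpow_pos_of_pos hr e
        nlinarith
      exact (Real.rpow_pos_of_pos this _).le
    rw [hG]; linarith
  have hGpow : G₁ ^ (ω - γ) ≤ 1 :=
    Real.rpow_le_one hG₁pos.le hG₁ (by linarith)
  -- key exponent identities
  have hρn : (ρ : ℝ) ^ (n : ℕ) = A ^ ((n : ℝ) / (2 * α)) := by
    rw [← Real.rpow_natCast ρ n, hρ, ← Real.rpow_mul hApos.le]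
    ring_nf
  have hkey1 : A ^ (-(((n : ℝ) + ω) / (2 * α))) * ρ ^ (n : ℕ) = B := by
    rw [hρn, ← Real.rpow_add hApos, hB]
    congr 1
    field_simp
    ring
  have hkey2 : ρ ^ (-ω) = B := by
    rw [hρ, ← Real.rpow_mul hApos.le, hB]
    congr 1
    field_simp
  have hρω : (0:ℝ) < ρ ^ (-ω) := Real.rpow_pos_of_pos hρpos _
  -- measurability
  have hmψ : Measurable fun x : EuclideanSpace ℝ (Fin n) => ENNReal.ofReal |ψ x| :=
    ENNReal.measurable_ofReal.comp hψ.abs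
  have hmfull : Measurable fun x : EuclideanSpace ℝ (Fin n) =>
      ENNReal.ofReal (|ψ x| * ‖x - xs‖ ^ ω) := by
    apply ENNReal.measurable_ofReal.comp
    have hc : Continuous fun x : EuclideanSpace ℝ (Fin n) => ‖x - xs‖ ^ ω :=
      (continuous_id.sub continuous_const).norm.rpow_const (fun x => Or.inr (by linarith))
    exact hψ.abs.mul hc.measurable
  haveI : Nonempty (Fin n) := ⟨⟨0, hn⟩⟩
  set S := Metric.ball xs ρ with hS
  have hSm : MeasurableSet S := Metric.isOpen_ball.measurableSet
  -- part 1: inside ball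
  have h1 : ∫⁻ x in S, ENNReal.ofReal |ψ x| ≤ ENNReal.ofReal (V.toReal * B) := by
    have hb : ∫⁻ x in S, ENNReal.ofReal |ψ x|
        ≤ ∫⁻ _x in S, ENNReal.ofReal (A ^ (-(((n : ℝ) + ω) / (2 * α)))) := by
      refine lintegral_mono_ae ?_
      filter_upwards [ae_restrict_of_ae hht] with x hx
      exact ENNReal.ofReal_le_ofReal hx
    rw [setLIntegral_const] at hb
    have hvol : volume S = ENNReal.ofReal (ρ ^ (n : ℕ)) * V := by
      rw [hS, Measure.addHaar_ball volume xs hρpos.le, finrank_euclideanSpace_fin]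
    calc ∫⁻ x in S, ENNReal.ofReal |ψ x|
        ≤ ENNReal.ofReal (A ^ (-(((n : ℝ) + ω) / (2 * α)))) * volume S := hb
      _ = ENNReal.ofReal (A ^ (-(((n : ℝ) + ω) / (2 * α)))) *
            (ENNReal.ofReal (ρ ^ (n : ℕ)) * ENNReal.ofReal V.toReal) := by
          rw [hvol, ENNReal.ofReal_toReal hVlt.ne]
      _ = ENNReal.ofReal (A ^ (-(((n : ℝ) + ω) / (2 * α))) * ρ ^ (n : ℕ) * V.toReal) := by
          rw [ENNReal.ofReal_mul (by positivity), ENNReal.ofReal_mul (by positivity), mul_assoc]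
      _ = ENNReal.ofReal (V.toReal * B) := by rw [hkey1, mul_comm]
  -- part 2: outside ball
  have h2 : ∫⁻ x in Sᶜ, ENNReal.ofReal |ψ x| ≤ ENNReal.ofReal B := by
    have hpt : ∀ x ∈ Sᶜ, ENNReal.ofReal |ψ x|
        ≤ ENNReal.ofReal (ρ ^ (-ω)) * ENNReal.ofReal (|ψ x| * ‖x - xs‖ ^ ω) := by
      intro x hx
      rw [← ENNReal.ofReal_mul hρω.le]
      apply ENNReal.ofReal_le_ofReal
      have hd : ρ ≤ ‖x - xs‖ := by
        simp only [hS, Set.mem_compl_iff, Metric.mem_ball, not_lt, dist_eq_norm] at hx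
        exact hx
      have hnρ : ρ ^ ω ≤ ‖x - xs‖ ^ ω :=
        Real.rpow_le_rpow hρpos.le hd (by linarith)
      have : ρ ^ (-ω) * (|ψ x| * ‖x - xs‖ ^ ω) = |ψ x| * (ρ ^ (-ω) * ‖x - xs‖ ^ ω) := by ring
      rw [this]
      have h1' : (1:ℝ) ≤ ρ ^ (-ω) * ‖x - xs‖ ^ ω := by
        have : ρ ^ (-ω) * ρ ^ ω = 1 := by
          rw [← Real.rpow_add hρpos]; simp
        nlinarith [mul_le_mul_of_nonneg_left hnρ hρω.le]
      nlinarith [abs_nonneg (ψ x)]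
    calc ∫⁻ x in Sᶜ, ENNReal.ofReal |ψ x|
        ≤ ∫⁻ x in Sᶜ, ENNReal.ofReal (ρ ^ (-ω)) * ENNReal.ofReal (|ψ x| * ‖x - xs‖ ^ ω) := by
          refine lintegral_mono_ae ?_
          rw [ae_restrict_iff' hSm.compl]
          exact ae_of_all _ hpt
      _ ≤ ∫⁻ x, ENNReal.ofReal (ρ ^ (-ω)) * ENNReal.ofReal (|ψ x| * ‖x - xs‖ ^ ω) :=
          setLIntegral_le_lintegral _ _
      _ = ENNReal.ofReal (ρ ^ (-ω)) * ∫⁻ x, ENNReal.ofReal (|ψ x| * ‖x - xs‖ ^ ω) :=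
          lintegral_const_mul _ hmfull
      _ ≤ ENNReal.ofReal (ρ ^ (-ω)) * ENNReal.ofReal (G₁ ^ (ω - γ)) := by
          exact mul_le_mul_right hconc _
      _ ≤ ENNReal.ofReal (ρ ^ (-ω)) * ENNReal.ofReal 1 := by
          exact mul_le_mul_right (ENNReal.ofReal_le_ofReal hGpow) _
      _ = ENNReal.ofReal B := by rw [ENNReal.ofReal_one, mul_one, hkey2]
  calc ∫⁻ x, ENNReal.ofReal |ψ x|
      = (∫⁻ x in S, ENNReal.ofReal |ψ x|) + ∫⁻ x in Sᶜ, ENNReal.ofReal |ψ x| :=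
        (lintegral_add_compl _ hSm).symm
    _ ≤ ENNReal.ofReal (V.toReal * B) + ENNReal.ofReal B := add_le_add h1 h2
    _ = ENNReal.ofReal (V.toReal * B + B) := by
        rw [← ENNReal.ofReal_add (by positivity) hBpos.le]
    _ = ENNReal.ofReal ((V.toReal + 1) * B) := by ring_nf
end

section
/- Let n ≥ 1 and let α, ω be real numbers with 0 < ω < 2α ≤ 1. There exists a constant C = C(n, ω, α) > 0 with the following property: for every measurable function ψ : ℝ^n → ℝ, every x₀ ∈ ℝ^n and every x̄ ∈ ℝ^n such that ψ(y) ≤ ψ(x̄) for all y ∈ ℝ^n, ψ(x̄) > 0, and ∫_{ℝ^n} |ψ(y)| |y − x₀|^ω dy ≤ 1, one has ∫_{ℝ^n} (ψ(x̄) − ψ(y)) / |x̄ − y|^{n+2α} dy ≥ C ψ(x̄)^{1 + 2α/(n+ω)}. -/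
open MeasureTheory Metric Real

set_option maxHeartbeats 2000000 in
theorem dissipation_lower_bound_at_max (n : ℕ) (hn : 1 ≤ n) (α ω : ℝ)
    (hω : 0 < ω) (hωα : ω < 2 * α) (hα : 2 * α ≤ 1) :
    ∃ C : ℝ, 0 < C ∧
      ∀ (ψ : EuclideanSpace ℝ (Fin n) → ℝ) (x₀ xb : EuclideanSpace ℝ (Fin n)),
        Measurable ψ → (∀ y, ψ y ≤ ψ xb) → 0 < ψ xb →
        (∫⁻ y : EuclideanSpace ℝ (Fin n),
            ENNReal.ofReal (|ψ y| * ‖y - x₀‖ ^ ω) ≤ 1) →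
        ENNReal.ofReal (C * ψ xb ^ (1 + 2 * α / ((n : ℝ) + ω))) ≤
          ∫⁻ y : EuclideanSpace ℝ (Fin n),
            ENNReal.ofReal ((ψ xb - ψ y) / ‖xb - y‖ ^ ((n : ℝ) + 2 * α)) := by
  have hn0 : (0:ℝ) < n := by exact_mod_cast hn
  have hα0 : (0:ℝ) < 2*α := lt_trans hω hωα
  have hnω : (0:ℝ) < (n:ℝ) + ω := by linarith
  set p : ℝ := (n:ℝ) + 2*α with hpdef
  have hp0 : 0 < p := by positivity
  -- volume of unit ball
  have hc₀top : volume (ball (0 : EuclideanSpace ℝ (Fin n)) 1) ≠ ⊤ := measure_ball_lt_top.ne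
  have hc₀pos : 0 < volume (ball (0 : EuclideanSpace ℝ (Fin n)) 1) :=
    measure_ball_pos _ _ one_pos
  set v : ℝ := (volume (ball (0 : EuclideanSpace ℝ (Fin n)) 1)).toReal with hvdef
  have hv0 : 0 < v := ENNReal.toReal_pos hc₀pos.ne' hc₀top
  have hc₀v : volume (ball (0 : EuclideanSpace ℝ (Fin n)) 1) = ENNReal.ofReal v :=
    (ENNReal.ofReal_toReal hc₀top).symm
  have h2n : (2:ℝ) ≤ 2^n := by
    calc (2:ℝ) = 2^1 := (pow_one 2).symm
    _ ≤ 2^n := pow_le_pow_right₀ one_le_two hn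
  have hb0 : (0:ℝ) < (2^n - 1)/4 := by linarith
  set a : ℝ := (2^n - 1) * v with hadef
  have ha0 : 0 < a := mul_pos (by linarith) hv0
  set κ : ℝ := ((2^n - 1)/4 : ℝ) ^ ((n:ℝ)⁻¹) with hκdef
  have hκ0 : 0 < κ := rpow_pos_of_pos hb0 _
  have hκn : κ ^ n = (2^n - 1)/4 := rpow_inv_natCast_pow hb0.le (by omega)
  have hκω : 0 < κ ^ ω := rpow_pos_of_pos hκ0 _
  set K : ℝ := 4 / (a * κ ^ ω) with hKdef
  have hK0 : 0 < K := by positivity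
  set β : ℝ := 2*α/((n:ℝ)+ω) with hβdef
  have hβ0 : 0 < β := by positivity
  set C : ℝ := a * K ^ (-β) / 2 ^ (p + 1) with hCdef
  have hC0 : 0 < C := by positivity
  refine ⟨C, hC0, ?_⟩
  intro ψ x₀ xb hmeas hmax hM hint
  set M : ℝ := ψ xb with hMdef
  set R : ℝ := (K / M) ^ (((n:ℝ)+ω)⁻¹) with hRdef
  have hR0 : 0 < R := rpow_pos_of_pos (by positivity) _
  have hRpow : R ^ ((n:ℝ)+ω) = K / M := by
    rw [hRdef, ← Real.rpow_mul (by positivity), inv_mul_cancel₀ hnω.ne', Real.rpow_one]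
  set r : ℝ := κ * R with hrdef
  have hr0 : 0 < r := mul_pos hκ0 hR0
  have hRn0 : (0:ℝ) < R ^ n := pow_pos hR0 n
  -- key real identities
  have hRn : (R:ℝ) ^ n * R ^ ω = K / M := by
    rw [← Real.rpow_natCast R n, ← Real.rpow_add hR0]; exact hRpow
  have hrωpos : 0 < r ^ ω := rpow_pos_of_pos hr0 _
  have hkey : M * a * R ^ n * r ^ ω = 4 := by
    have h1 : r ^ ω = κ ^ ω * R ^ ω := Real.mul_rpow hκ0.le hR0.le
    have h2 : a * κ ^ ω * K = 4 := by
      rw [hKdef]; field_simp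
    calc M * a * R^n * r^ω = M * a * κ^ω * (R^n * R^ω) := by rw [h1]; ring
    _ = M * a * κ^ω * (K/M) := by rw [hRn]
    _ = a * κ^ω * K := by field_simp
    _ = 4 := h2
  have hrω : (r ^ ω)⁻¹ = M * a * R ^ n / 4 := by
    rw [eq_div_iff (by norm_num : (4:ℝ) ≠ 0), ← hkey]
    field_simp
  have hvrn : r ^ n * v = a * R ^ n / 4 := by
    rw [hrdef, mul_pow, hκn, hadef]; ring
  -- the sets
  set A : Set (EuclideanSpace ℝ (Fin n)) := closedBall xb (2*R) \ ball xb R with hAdef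
  set S : Set (EuclideanSpace ℝ (Fin n)) := A \ ball x₀ r with hSdef
  have hSmeas : MeasurableSet S :=
    (measurableSet_closedBall.diff measurableSet_ball).diff measurableSet_ball
  have hfr : Module.finrank ℝ (EuclideanSpace ℝ (Fin n)) = n := finrank_euclideanSpace_fin
  -- volume lower bound for S
  have hμS : ENNReal.ofReal (3*a*R^n/4) ≤ volume S := by
    have hcb2 : volume (closedBall xb (2*R)) = ENNReal.ofReal ((2*R)^n * v) := by
      rw [Measure.addHaar_closedBall _ _ (by positivity : (0:ℝ) ≤ 2*R), hfr, hc₀v,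
        ← ENNReal.ofReal_mul (by positivity)]
    have hballR : volume (ball xb R) ≤ ENNReal.ofReal (R^n * v) := by
      calc volume (ball xb R) ≤ volume (closedBall xb R) := measure_mono ball_subset_closedBall
      _ = ENNReal.ofReal (R^n * v) := by
        rw [Measure.addHaar_closedBall _ _ hR0.le, hfr, hc₀v,
          ← ENNReal.ofReal_mul (by positivity)]
    have hballr : volume (ball x₀ r) ≤ ENNReal.ofReal (r^n * v) := by
      calc volume (ball x₀ r) ≤ volume (closedBall x₀ r) := measure_mono ball_subset_closedBall
      _ = ENNReal.ofReal (r^n * v) := by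
        rw [Measure.addHaar_closedBall _ _ hr0.le, hfr, hc₀v,
          ← ENNReal.ofReal_mul (by positivity)]
    have hincl : closedBall xb (2*R) ⊆ (S ∪ ball x₀ r) ∪ ball xb R := by
      intro y hy
      by_cases h1 : y ∈ ball xb R
      · exact Or.inr h1
      · by_cases h2 : y ∈ ball x₀ r
        · exact Or.inl (Or.inr h2)
        · exact Or.inl (Or.inl ⟨⟨hy, h1⟩, h2⟩)
    have hle : ENNReal.ofReal ((2*R)^n * v) ≤
        volume S + ENNReal.ofReal (r^n * v + R^n * v) := by
      calc ENNReal.ofReal ((2*R)^n * v) = volume (closedBall xb (2*R)) := hcb2.symm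
      _ ≤ volume ((S ∪ ball x₀ r) ∪ ball xb R) := measure_mono hincl
      _ ≤ volume (S ∪ ball x₀ r) + volume (ball xb R) := measure_union_le _ _
      _ ≤ (volume S + volume (ball x₀ r)) + volume (ball xb R) :=
          add_le_add_left (measure_union_le _ _) _
      _ ≤ (volume S + ENNReal.ofReal (r^n * v)) + ENNReal.ofReal (R^n * v) := by
          gcongr
      _ = volume S + ENNReal.ofReal (r^n * v + R^n * v) := by
          rw [add_assoc, ENNReal.ofReal_add (by positivity) (by positivity)]
    have heq : (3:ℝ)*a*R^n/4 = (2*R)^n * v - (r^n * v + R^n * v) := by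
      have h1 : ((2:ℝ)*R)^n * v = 2^n * (R^n * v) := by rw [mul_pow]; ring
      rw [h1, hvrn, hadef]; ring
    rw [heq, ENNReal.ofReal_sub _ (by positivity)]
    exact tsub_le_iff_right.mpr hle
  -- pointwise facts and the integral chain
  have hψsub : Measurable fun y => ENNReal.ofReal (M - ψ y) :=
    (measurable_const.sub hmeas).ennreal_ofReal
  have hwt : Measurable fun y : EuclideanSpace ℝ (Fin n) =>
      ENNReal.ofReal (|ψ y| * ‖y - x₀‖ ^ ω) := by fun_prop
  -- tail estimate on S
  have htail : ∫⁻ y in S, ENNReal.ofReal |ψ y| ≤ ENNReal.ofReal ((r ^ ω)⁻¹) := by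
    have hpt : ∀ y ∈ S, ENNReal.ofReal |ψ y| ≤
        ENNReal.ofReal (|ψ y| * ‖y - x₀‖ ^ ω) * ENNReal.ofReal ((r ^ ω)⁻¹) := by
      intro y hy
      have hyr : r ≤ dist y x₀ := by
        have := hy.2
        simpa [Metric.mem_ball, not_lt] using this
      have hnorm : r ≤ ‖y - x₀‖ := by rwa [← dist_eq_norm]
      have h1 : r ^ ω ≤ ‖y - x₀‖ ^ ω := rpow_le_rpow hr0.le hnorm hω.le
      have h2 : |ψ y| ≤ |ψ y| * ‖y - x₀‖ ^ ω * (r ^ ω)⁻¹ := by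
        rw [mul_assoc]
        nth_rewrite 1 [← mul_one |ψ y|]
        apply mul_le_mul_of_nonneg_left _ (abs_nonneg _)
        rw [← div_eq_mul_inv, le_div_iff₀ hrωpos, one_mul]
        exact h1
      calc ENNReal.ofReal |ψ y| ≤ ENNReal.ofReal (|ψ y| * ‖y - x₀‖ ^ ω * (r ^ ω)⁻¹) :=
            ENNReal.ofReal_le_ofReal h2
      _ = ENNReal.ofReal (|ψ y| * ‖y - x₀‖ ^ ω) * ENNReal.ofReal ((r ^ ω)⁻¹) :=
            ENNReal.ofReal_mul (by positivity)
    calc ∫⁻ y in S, ENNReal.ofReal |ψ y|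
        ≤ ∫⁻ y in S, ENNReal.ofReal (|ψ y| * ‖y - x₀‖ ^ ω) * ENNReal.ofReal ((r ^ ω)⁻¹) :=
          setLIntegral_mono' hSmeas hpt
      _ = (∫⁻ y in S, ENNReal.ofReal (|ψ y| * ‖y - x₀‖ ^ ω)) * ENNReal.ofReal ((r ^ ω)⁻¹) :=
          lintegral_mul_const _ hwt
      _ ≤ 1 * ENNReal.ofReal ((r ^ ω)⁻¹) := by
          gcongr
          exact le_trans (setLIntegral_le_lintegral _ _) hint
      _ = ENNReal.ofReal ((r ^ ω)⁻¹) := one_mul _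
  -- lower bound for ∫_S (M - ψ)
  have hJ : ENNReal.ofReal M * volume S - ENNReal.ofReal ((r ^ ω)⁻¹) ≤
      ∫⁻ y in S, ENNReal.ofReal (M - ψ y) := by
    rw [tsub_le_iff_right]
    have habs : Measurable fun y => ENNReal.ofReal |ψ y| := by fun_prop
    calc ENNReal.ofReal M * volume S = ∫⁻ _ in S, ENNReal.ofReal M :=
          (setLIntegral_const _ _).symm
      _ ≤ ∫⁻ y in S, (ENNReal.ofReal (M - ψ y) + ENNReal.ofReal |ψ y|) := by
          apply lintegral_mono
          intro y
          show ENNReal.ofReal M ≤ ENNReal.ofReal (M - ψ y) + ENNReal.ofReal |ψ y|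
          rw [← ENNReal.ofReal_add (by linarith [hmax y]) (abs_nonneg _)]
          exact ENNReal.ofReal_le_ofReal (by nlinarith [le_abs_self (ψ y), neg_abs_le (ψ y)])
      _ = (∫⁻ y in S, ENNReal.ofReal (M - ψ y)) + ∫⁻ y in S, ENNReal.ofReal |ψ y| :=
          lintegral_add_left hψsub _
      _ ≤ (∫⁻ y in S, ENNReal.ofReal (M - ψ y)) + ENNReal.ofReal ((r ^ ω)⁻¹) := by
          gcongr
  -- pointwise bound on the kernel over S
  have hker : ∀ y ∈ S, ENNReal.ofReal (M - ψ y) * ENNReal.ofReal (((2*R) ^ p)⁻¹) ≤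
      ENNReal.ofReal ((M - ψ y) / ‖xb - y‖ ^ p) := by
    intro y hy
    obtain ⟨⟨hy1, hy2⟩, _⟩ := hy
    have hd1 : dist y xb ≤ 2*R := mem_closedBall.mp hy1
    have hd2 : R ≤ dist y xb := by simpa [Metric.mem_ball, not_lt] using hy2
    have hnorm : ‖xb - y‖ = dist y xb := by rw [dist_comm, dist_eq_norm]
    have hdpos : 0 < ‖xb - y‖ := by rw [hnorm]; linarith
    have hdp : ‖xb - y‖ ^ p ≤ (2*R) ^ p := by
      apply rpow_le_rpow hdpos.le _ hp0.le
      rw [hnorm]; exact hd1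
    have hnum : 0 ≤ M - ψ y := by linarith [hmax y]
    rw [← ENNReal.ofReal_mul hnum, ← div_eq_mul_inv]
    apply ENNReal.ofReal_le_ofReal
    exact div_le_div_of_nonneg_left hnum (rpow_pos_of_pos hdpos p) hdp
  -- numeric final identity
  have hMβ : 0 < M ^ β := rpow_pos_of_pos hM _
  have hKβ : 0 < K ^ β := rpow_pos_of_pos hK0 _
  have h2p : (0:ℝ) < 2 ^ p := rpow_pos_of_pos two_pos _
  have hR2α : R ^ (2*α) = (K/M) ^ β := by
    rw [hRdef, ← Real.rpow_mul (by positivity)]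
    congr 1
    rw [hβdef]; field_simp
  have hfinal : C * M ^ (1 + 2*α/((n:ℝ)+ω)) = M * a * R^n / 2 * ((2*R) ^ p)⁻¹ := by
    have h2R : (2*R) ^ p = 2 ^ p * R ^ p := Real.mul_rpow (by norm_num) hR0.le
    have hRp : R ^ p = R ^ n * R ^ (2*α) := by
      rw [hpdef, Real.rpow_add hR0, Real.rpow_natCast]
    have hKM : (K/M) ^ β = K ^ β / M ^ β := Real.div_rpow hK0.le hM.le β
    have h2p1 : (2:ℝ) ^ (p+1) = 2 ^ p * 2 := by
      rw [Real.rpow_add two_pos, Real.rpow_one]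
    have hM1β : M ^ (1 + 2*α/((n:ℝ)+ω)) = M * M ^ β := by
      rw [hβdef, Real.rpow_add hM, Real.rpow_one]
    have hKnβ : K ^ (-β) = (K ^ β)⁻¹ := by
      rw [Real.rpow_neg hK0.le]
    rw [hCdef, hM1β, h2R, hRp, hR2α, hKM, h2p1, hKnβ]
    field_simp
  -- put everything together
  calc ENNReal.ofReal (C * M ^ (1 + 2*α/((n:ℝ)+ω)))
      = ENNReal.ofReal (M * a * R^n / 2 * ((2*R) ^ p)⁻¹) := by rw [hfinal]
    _ = ENNReal.ofReal (M * a * R^n / 2) * ENNReal.ofReal (((2*R) ^ p)⁻¹) :=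
        ENNReal.ofReal_mul (by positivity)
    _ ≤ (ENNReal.ofReal M * volume S - ENNReal.ofReal ((r ^ ω)⁻¹)) *
        ENNReal.ofReal (((2*R) ^ p)⁻¹) := by
        gcongr
        have h1 : ENNReal.ofReal (M * (3*a*R^n/4)) ≤ ENNReal.ofReal M * volume S := by
          rw [ENNReal.ofReal_mul hM.le]
          exact mul_le_mul_right hμS _
        have h2 : (M * a * R^n / 2 : ℝ) = M * (3*a*R^n/4) - M * a * R^n / 4 := by ring
        rw [h2, hrω, ENNReal.ofReal_sub _ (by positivity)]
        exact tsub_le_tsub_right h1 _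
    _ ≤ (∫⁻ y in S, ENNReal.ofReal (M - ψ y)) * ENNReal.ofReal (((2*R) ^ p)⁻¹) := by
        gcongr
    _ = ∫⁻ y in S, ENNReal.ofReal (M - ψ y) * ENNReal.ofReal (((2*R) ^ p)⁻¹) :=
        (lintegral_mul_const _ hψsub).symm
    _ ≤ ∫⁻ y in S, ENNReal.ofReal ((M - ψ y) / ‖xb - y‖ ^ p) :=
        setLIntegral_mono' hSmeas hker
    _ ≤ ∫⁻ y, ENNReal.ofReal ((M - ψ y) / ‖xb - y‖ ^ p) :=
        setLIntegral_le_lintegral _ _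
end

section
/- Let n ≥ 1 and 0 < α < 1/2. Let ϕ : ℝ^n → ℝ be bounded and Lipschitz, let R > 0 and set φ(x) = ϕ(x/R). Then there exists a constant C depending only on n and α such that for every integrable function A : ℝ^n → ℝ, ∫_{ℝ^n} ∫_{ℝ^n} |φ(x) − φ(y)| · |A(y)| / |x − y|^{n+2α} dy dx ≤ C (‖ϕ‖_{L^∞} + Lip(ϕ)) R^{−2α} ‖A‖_{L^1}. In particular the commutator [Λ^{2α}, φ]A satisfies ‖[Λ^{2α}, φ]A‖_{L^1} ≤ C (‖ϕ‖_{L^∞} + Lip(ϕ)) R^{−2α} ‖A‖_{L^1}. -/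
open MeasureTheory Metric ENNReal

variable {n : ℕ}

-- annulus bound
lemma annulus_bound (n : ℕ) {q ρ r : ℝ} (hq : 0 ≤ q) (hρ : 0 < ρ) (hr : 0 ≤ r) :
    ∫⁻ z in {z : EuclideanSpace ℝ (Fin n) | ρ ≤ ‖z‖} ∩ closedBall 0 r,
      ENNReal.ofReal (‖z‖ ^ (-q)) ≤
      ENNReal.ofReal (ρ ^ (-q) * r ^ (n : ℝ)) * volume (ball (0 : EuclideanSpace ℝ (Fin n)) 1) := by
  have hmeas : MeasurableSet ({z : EuclideanSpace ℝ (Fin n) | ρ ≤ ‖z‖} ∩ closedBall 0 r) :=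
    (measurableSet_le measurable_const measurable_norm).inter measurableSet_closedBall
  calc ∫⁻ z in {z : EuclideanSpace ℝ (Fin n) | ρ ≤ ‖z‖} ∩ closedBall 0 r,
        ENNReal.ofReal (‖z‖ ^ (-q))
      ≤ ∫⁻ _ in {z : EuclideanSpace ℝ (Fin n) | ρ ≤ ‖z‖} ∩ closedBall 0 r,
        ENNReal.ofReal (ρ ^ (-q)) := by
        refine setLIntegral_mono measurable_const fun z hz => ?_
        exact ENNReal.ofReal_le_ofReal
          (Real.rpow_le_rpow_of_nonpos hρ hz.1 (neg_nonpos.2 hq))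
    _ = ENNReal.ofReal (ρ ^ (-q)) *
        volume ({z : EuclideanSpace ℝ (Fin n) | ρ ≤ ‖z‖} ∩ closedBall 0 r) := by
        rw [setLIntegral_const]
    _ ≤ ENNReal.ofReal (ρ ^ (-q)) * volume (closedBall (0 : EuclideanSpace ℝ (Fin n)) r) := by
        gcongr
        exact Set.inter_subset_right
    _ = ENNReal.ofReal (ρ ^ (-q) * r ^ (n : ℝ)) *
        volume (ball (0 : EuclideanSpace ℝ (Fin n)) 1) := by
        rw [Measure.addHaar_closedBall _ _ hr, finrank_euclideanSpace_fin,
          ENNReal.ofReal_mul (Real.rpow_nonneg hρ.le _), ← mul_assoc,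
          Real.rpow_natCast]

lemma geom_tsum_ne_top {x : ℝ} (hx0 : 0 ≤ x) (hx1 : x < 1) :
    (∑' k : ℕ, ENNReal.ofReal x ^ k) ≠ ⊤ := by
  rw [ENNReal.tsum_geometric]
  refine ENNReal.inv_ne_top.2 ?_
  simp only [ne_eq, tsub_eq_zero_iff_le, not_le]
  exact ENNReal.ofReal_lt_one.2 hx1

lemma lint_ball_rpow (n : ℕ) {q : ℝ} (hq : 0 < q) (hqn : q < n) :
    ∃ c : ℝ≥0∞, c ≠ ⊤ ∧ ∀ R : ℝ, 0 < R →
      ∫⁻ z in ball (0 : EuclideanSpace ℝ (Fin n)) R, ENNReal.ofReal (‖z‖ ^ (-q)) ≤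
        ENNReal.ofReal (R ^ ((n : ℝ) - q)) * c := by
  set B := volume (ball (0 : EuclideanSpace ℝ (Fin n)) 1) with hB
  have hBne : B ≠ ⊤ := measure_ball_lt_top.ne
  have hratio0 : (0:ℝ) ≤ (2:ℝ) ^ (q - (n:ℝ)) := Real.rpow_nonneg (by norm_num) _
  have hratio1 : (2:ℝ) ^ (q - (n:ℝ)) < 1 :=
    Real.rpow_lt_one_of_one_lt_of_neg (by norm_num) (by linarith)
  refine ⟨ENNReal.ofReal ((2:ℝ) ^ q) * (∑' k : ℕ, ENNReal.ofReal ((2:ℝ) ^ (q - (n:ℝ))) ^ k) * B,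
    by
      apply ENNReal.mul_ne_top
      apply ENNReal.mul_ne_top ENNReal.ofReal_ne_top (geom_tsum_ne_top hratio0 hratio1)
      exact hBne, fun R hR => ?_⟩
  -- covering
  have hcov : ball (0 : EuclideanSpace ℝ (Fin n)) R ⊆
      {(0 : EuclideanSpace ℝ (Fin n))} ∪ ⋃ k : ℕ,
        ({z : EuclideanSpace ℝ (Fin n) | R * (2:ℝ) ^ (-((k:ℝ)+1)) ≤ ‖z‖} ∩
          closedBall 0 (R * (2:ℝ) ^ (-(k:ℝ)))) := by
    intro z hz
    rcases eq_or_ne z 0 with rfl | hz0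
    · exact Or.inl rfl
    refine Or.inr ?_
    have hzn : 0 < ‖z‖ := norm_pos_iff.2 hz0
    have hzR : ‖z‖ < R := by simpa using mem_ball_iff_norm.1 hz
    have ht1 : 1 < R / ‖z‖ := (one_lt_div hzn).2 hzR
    set t := Real.logb 2 (R / ‖z‖) with htdef
    have ht0 : 0 ≤ t := Real.logb_nonneg (by norm_num) ht1.le
    have hrt : (2:ℝ) ^ t = R / ‖z‖ := Real.rpow_logb (by norm_num) (by norm_num) (by positivity)
    set k := ⌊t⌋₊ with hk
    have h1 : (2:ℝ) ^ (k:ℝ) ≤ R / ‖z‖ := by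
      rw [← hrt]
      exact Real.rpow_le_rpow_of_exponent_le (by norm_num) (Nat.floor_le ht0)
    have h2 : R / ‖z‖ < (2:ℝ) ^ ((k:ℝ)+1) := by
      rw [← hrt]
      exact Real.rpow_lt_rpow_of_exponent_lt (by norm_num) (Nat.lt_floor_add_one t)
    refine Set.mem_iUnion.2 ⟨k, ⟨?_, ?_⟩⟩
    · -- R * 2^(-(k+1)) ≤ ‖z‖
      have := (div_lt_iff₀ hzn).1 h2
      rw [Set.mem_setOf_eq, Real.rpow_neg (by norm_num), mul_comm]
      rw [inv_mul_le_iff₀ (by positivity)]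
      linarith [this]
    · -- ‖z‖ ≤ R * 2^(-k)
      have := (le_div_iff₀ hzn).1 h1
      rw [mem_closedBall, dist_zero_right, Real.rpow_neg (by norm_num), mul_comm,
        inv_mul_eq_div, le_div_iff₀ (by positivity)]
      linarith [this]
  calc ∫⁻ z in ball (0 : EuclideanSpace ℝ (Fin n)) R, ENNReal.ofReal (‖z‖ ^ (-q))
      ≤ ∫⁻ z in ({(0 : EuclideanSpace ℝ (Fin n))} ∪ ⋃ k : ℕ,
          ({z : EuclideanSpace ℝ (Fin n) | R * (2:ℝ) ^ (-((k:ℝ)+1)) ≤ ‖z‖} ∩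
            closedBall 0 (R * (2:ℝ) ^ (-(k:ℝ))))), ENNReal.ofReal (‖z‖ ^ (-q)) :=
        lintegral_mono_set hcov
    _ ≤ (∫⁻ z in ({(0 : EuclideanSpace ℝ (Fin n))} : Set _), ENNReal.ofReal (‖z‖ ^ (-q)))
        + ∫⁻ z in (⋃ k : ℕ,
          ({z : EuclideanSpace ℝ (Fin n) | R * (2:ℝ) ^ (-((k:ℝ)+1)) ≤ ‖z‖} ∩
            closedBall 0 (R * (2:ℝ) ^ (-(k:ℝ))))), ENNReal.ofReal (‖z‖ ^ (-q)) :=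
        lintegral_union_le _ _ _
    _ ≤ 0 + ∑' k : ℕ, ∫⁻ z in
          ({z : EuclideanSpace ℝ (Fin n) | R * (2:ℝ) ^ (-((k:ℝ)+1)) ≤ ‖z‖} ∩
            closedBall 0 (R * (2:ℝ) ^ (-(k:ℝ)))), ENNReal.ofReal (‖z‖ ^ (-q)) := by
        gcongr
        · rw [lintegral_singleton]
          simp [Real.zero_rpow (neg_ne_zero.2 hq.ne')]
        · exact lintegral_iUnion_le _ _
    _ ≤ ∑' k : ℕ, ENNReal.ofReal ((R * (2:ℝ) ^ (-((k:ℝ)+1))) ^ (-q) *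
          (R * (2:ℝ) ^ (-(k:ℝ))) ^ ((n:ℝ))) * B := by
        rw [zero_add]
        refine ENNReal.tsum_le_tsum fun k => ?_
        exact annulus_bound n hq.le (by positivity) (by positivity)
    _ = ENNReal.ofReal (R ^ ((n : ℝ) - q)) *
        (ENNReal.ofReal ((2:ℝ) ^ q) * (∑' k : ℕ, ENNReal.ofReal ((2:ℝ) ^ (q - (n:ℝ))) ^ k) * B) := by
        have key : ∀ k : ℕ, (R * (2:ℝ) ^ (-((k:ℝ)+1))) ^ (-q) *
            (R * (2:ℝ) ^ (-(k:ℝ))) ^ ((n:ℝ)) =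
            R ^ ((n : ℝ) - q) * ((2:ℝ) ^ q * ((2:ℝ) ^ (q - (n:ℝ))) ^ k) := by
          intro k
          rw [Real.mul_rpow hR.le (by positivity), Real.mul_rpow hR.le (by positivity),
            mul_mul_mul_comm, ← Real.rpow_add hR,
            ← Real.rpow_mul (by norm_num : (0:ℝ) ≤ 2), ← Real.rpow_mul (by norm_num : (0:ℝ) ≤ 2),
            ← Real.rpow_add (by norm_num : (0:ℝ) < 2),
            ← Real.rpow_natCast ((2:ℝ) ^ (q - (n:ℝ))) k,
            ← Real.rpow_mul (by norm_num : (0:ℝ) ≤ 2),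
            ← Real.rpow_add (by norm_num : (0:ℝ) < 2)]
          congr 1
          · congr 1; ring
          · congr 1; ring
        calc ∑' k : ℕ, ENNReal.ofReal ((R * (2:ℝ) ^ (-((k:ℝ)+1))) ^ (-q) *
              (R * (2:ℝ) ^ (-(k:ℝ))) ^ ((n:ℝ))) * B
            = ∑' k : ℕ, ENNReal.ofReal (R ^ ((n : ℝ) - q)) *
              (ENNReal.ofReal ((2:ℝ) ^ q) * ENNReal.ofReal ((2:ℝ) ^ (q - (n:ℝ))) ^ k * B) := by
              refine tsum_congr fun k => ?_
              rw [key k, ENNReal.ofReal_mul (by positivity), ENNReal.ofReal_mul (by positivity),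
                ENNReal.ofReal_pow hratio0]
              ring
          _ = ENNReal.ofReal (R ^ ((n : ℝ) - q)) *
              (ENNReal.ofReal ((2:ℝ) ^ q) * (∑' k : ℕ, ENNReal.ofReal ((2:ℝ) ^ (q - (n:ℝ))) ^ k) * B) := by
              rw [ENNReal.tsum_mul_left, ENNReal.tsum_mul_right, ENNReal.tsum_mul_left]

lemma lint_compl_rpow (n : ℕ) {q : ℝ} (hqn : (n : ℝ) < q) :
    ∃ c : ℝ≥0∞, c ≠ ⊤ ∧ ∀ R : ℝ, 0 < R →
      ∫⁻ z in (ball (0 : EuclideanSpace ℝ (Fin n)) R)ᶜ, ENNReal.ofReal (‖z‖ ^ (-q)) ≤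
        ENNReal.ofReal (R ^ ((n : ℝ) - q)) * c := by
  have hq : 0 ≤ q := le_trans (Nat.cast_nonneg n) hqn.le
  set B := volume (ball (0 : EuclideanSpace ℝ (Fin n)) 1) with hB
  have hBne : B ≠ ⊤ := measure_ball_lt_top.ne
  have hratio0 : (0:ℝ) ≤ (2:ℝ) ^ ((n:ℝ) - q) := Real.rpow_nonneg (by norm_num) _
  have hratio1 : (2:ℝ) ^ ((n:ℝ) - q) < 1 :=
    Real.rpow_lt_one_of_one_lt_of_neg (by norm_num) (by linarith)
  refine ⟨ENNReal.ofReal ((2:ℝ) ^ (n:ℝ)) *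
      (∑' k : ℕ, ENNReal.ofReal ((2:ℝ) ^ ((n:ℝ) - q)) ^ k) * B,
    by
      apply ENNReal.mul_ne_top
      apply ENNReal.mul_ne_top ENNReal.ofReal_ne_top (geom_tsum_ne_top hratio0 hratio1)
      exact hBne, fun R hR => ?_⟩
  have hcov : (ball (0 : EuclideanSpace ℝ (Fin n)) R)ᶜ ⊆
      ⋃ k : ℕ, ({z : EuclideanSpace ℝ (Fin n) | R * (2:ℝ) ^ ((k:ℝ)) ≤ ‖z‖} ∩
        closedBall 0 (R * (2:ℝ) ^ ((k:ℝ)+1))) := by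
    intro z hz
    have hzR : R ≤ ‖z‖ := by
      have := mem_ball_iff_norm.not.1 hz
      simp only [sub_zero, not_lt] at this
      exact this
    have hzn : 0 < ‖z‖ := lt_of_lt_of_le hR hzR
    have ht1 : 1 ≤ ‖z‖ / R := (one_le_div hR).2 hzR
    set t := Real.logb 2 (‖z‖ / R) with htdef
    have ht0 : 0 ≤ t := Real.logb_nonneg (by norm_num) ht1
    have hrt : (2:ℝ) ^ t = ‖z‖ / R := Real.rpow_logb (by norm_num) (by norm_num) (by positivity)
    set k := ⌊t⌋₊ with hk
    have h1 : (2:ℝ) ^ (k:ℝ) ≤ ‖z‖ / R := by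
      rw [← hrt]
      exact Real.rpow_le_rpow_of_exponent_le (by norm_num) (Nat.floor_le ht0)
    have h2 : ‖z‖ / R < (2:ℝ) ^ ((k:ℝ)+1) := by
      rw [← hrt]
      exact Real.rpow_lt_rpow_of_exponent_lt (by norm_num) (Nat.lt_floor_add_one t)
    refine Set.mem_iUnion.2 ⟨k, ⟨?_, ?_⟩⟩
    · rw [Set.mem_setOf_eq, mul_comm, ← le_div_iff₀ hR]
      exact h1
    · rw [mem_closedBall, dist_zero_right, mul_comm, ← div_le_iff₀ hR]
      exact h2.le
  calc ∫⁻ z in (ball (0 : EuclideanSpace ℝ (Fin n)) R)ᶜ, ENNReal.ofReal (‖z‖ ^ (-q))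
      ≤ ∫⁻ z in (⋃ k : ℕ, ({z : EuclideanSpace ℝ (Fin n) | R * (2:ℝ) ^ ((k:ℝ)) ≤ ‖z‖} ∩
          closedBall 0 (R * (2:ℝ) ^ ((k:ℝ)+1)))), ENNReal.ofReal (‖z‖ ^ (-q)) :=
        lintegral_mono_set hcov
    _ ≤ ∑' k : ℕ, ∫⁻ z in
          ({z : EuclideanSpace ℝ (Fin n) | R * (2:ℝ) ^ ((k:ℝ)) ≤ ‖z‖} ∩
            closedBall 0 (R * (2:ℝ) ^ ((k:ℝ)+1))), ENNReal.ofReal (‖z‖ ^ (-q)) :=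
        lintegral_iUnion_le _ _
    _ ≤ ∑' k : ℕ, ENNReal.ofReal ((R * (2:ℝ) ^ ((k:ℝ))) ^ (-q) *
          (R * (2:ℝ) ^ ((k:ℝ)+1)) ^ ((n:ℝ))) * B := by
        refine ENNReal.tsum_le_tsum fun k => ?_
        exact annulus_bound n hq (by positivity) (by positivity)
    _ = ENNReal.ofReal (R ^ ((n : ℝ) - q)) *
        (ENNReal.ofReal ((2:ℝ) ^ (n:ℝ)) *
          (∑' k : ℕ, ENNReal.ofReal ((2:ℝ) ^ ((n:ℝ) - q)) ^ k) * B) := by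
        have key : ∀ k : ℕ, (R * (2:ℝ) ^ ((k:ℝ))) ^ (-q) * (R * (2:ℝ) ^ ((k:ℝ)+1)) ^ ((n:ℝ)) =
            R ^ ((n : ℝ) - q) * ((2:ℝ) ^ (n:ℝ) * ((2:ℝ) ^ ((n:ℝ) - q)) ^ k) := by
          intro k
          rw [Real.mul_rpow hR.le (by positivity), Real.mul_rpow hR.le (by positivity),
            mul_mul_mul_comm, ← Real.rpow_add hR,
            ← Real.rpow_mul (by norm_num : (0:ℝ) ≤ 2), ← Real.rpow_mul (by norm_num : (0:ℝ) ≤ 2),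
            ← Real.rpow_add (by norm_num : (0:ℝ) < 2),
            ← Real.rpow_natCast ((2:ℝ) ^ ((n:ℝ) - q)) k,
            ← Real.rpow_mul (by norm_num : (0:ℝ) ≤ 2),
            ← Real.rpow_add (by norm_num : (0:ℝ) < 2)]
          congr 1
          · congr 1; ring
          · congr 1; ring
        calc ∑' k : ℕ, ENNReal.ofReal ((R * (2:ℝ) ^ ((k:ℝ))) ^ (-q) *
              (R * (2:ℝ) ^ ((k:ℝ)+1)) ^ ((n:ℝ))) * B
            = ∑' k : ℕ, ENNReal.ofReal (R ^ ((n : ℝ) - q)) *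
              (ENNReal.ofReal ((2:ℝ) ^ (n:ℝ)) * ENNReal.ofReal ((2:ℝ) ^ ((n:ℝ) - q)) ^ k * B) := by
              refine tsum_congr fun k => ?_
              rw [key k, ENNReal.ofReal_mul (by positivity), ENNReal.ofReal_mul (by positivity),
                ENNReal.ofReal_pow hratio0]
              ring
          _ = _ := by
              rw [ENNReal.tsum_mul_left, ENNReal.tsum_mul_right, ENNReal.tsum_mul_left]

lemma kernel_bound (n : ℕ) (hn : 1 ≤ n) (α : ℝ) (hα : 0 < α) (hα' : α < 1 / 2) :
    ∃ c : ℝ≥0∞, c ≠ ⊤ ∧ ∀ (L M R : ℝ), 0 ≤ L → 0 ≤ M → 0 < R →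
      ∫⁻ z : EuclideanSpace ℝ (Fin n),
          ENNReal.ofReal (min (L * ‖z‖ / R) (2 * M) / ‖z‖ ^ ((n : ℝ) + 2 * α)) ≤
        ENNReal.ofReal (R ^ (-(2 * α))) * (ENNReal.ofReal (M + L) * c) := by
  have hn' : (1:ℝ) ≤ (n:ℝ) := by exact_mod_cast hn
  obtain ⟨c₁, hc₁top, hc₁⟩ := lint_ball_rpow n (q := (n:ℝ) - 1 + 2 * α)
    (by linarith) (by linarith)
  obtain ⟨c₂, hc₂top, hc₂⟩ := lint_compl_rpow n (q := (n:ℝ) + 2 * α) (by linarith)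
  refine ⟨c₁ + 2 * c₂, by
      apply ENNReal.add_ne_top.2
      exact ⟨hc₁top, ENNReal.mul_ne_top (by norm_num) hc₂top⟩, fun L M R hL hM hR => ?_⟩
  set s : ℝ := (n : ℝ) + 2 * α with hs
  have hs0 : 0 < s := by positivity
  have hq1 : (0:ℝ) < (n:ℝ) - 1 + 2 * α := by linarith
  -- split into ball and complement
  rw [← lintegral_add_compl (μ := volume)
    (fun z => ENNReal.ofReal (min (L * ‖z‖ / R) (2 * M) / ‖z‖ ^ s))
    (measurableSet_ball (x := (0 : EuclideanSpace ℝ (Fin n))) (ε := R))]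
  have hball : ∫⁻ z in ball (0 : EuclideanSpace ℝ (Fin n)) R,
      ENNReal.ofReal (min (L * ‖z‖ / R) (2 * M) / ‖z‖ ^ s) ≤
      ENNReal.ofReal (R ^ (-(2*α))) * (ENNReal.ofReal L * c₁) := by
    have hpt : ∀ z : EuclideanSpace ℝ (Fin n),
        ENNReal.ofReal (min (L * ‖z‖ / R) (2 * M) / ‖z‖ ^ s) ≤
        ENNReal.ofReal ((L / R) * ‖z‖ ^ (-((n:ℝ) - 1 + 2 * α))) := by
      intro z
      apply ENNReal.ofReal_le_ofReal
      rcases eq_or_ne z 0 with rfl | hz0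
      · have h0 : ‖(0 : EuclideanSpace ℝ (Fin n))‖ ^ s = 0 := by
          rw [norm_zero]; exact Real.zero_rpow hs0.ne'
        rw [h0, _root_.div_zero, norm_zero, Real.zero_rpow (neg_ne_zero.2 hq1.ne'), mul_zero]
      · have hzn : 0 < ‖z‖ := norm_pos_iff.2 hz0
        calc min (L * ‖z‖ / R) (2 * M) / ‖z‖ ^ s ≤ (L * ‖z‖ / R) / ‖z‖ ^ s :=
              div_le_div_of_nonneg_right (min_le_left _ _) (by positivity)
          _ = (L / R) * ‖z‖ ^ (-((n:ℝ) - 1 + 2 * α)) := by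
              rw [show -((n:ℝ) - 1 + 2 * α) = 1 - s by rw [hs]; ring,
                Real.rpow_sub hzn, Real.rpow_one]
              field_simp
    calc ∫⁻ z in ball (0 : EuclideanSpace ℝ (Fin n)) R,
          ENNReal.ofReal (min (L * ‖z‖ / R) (2 * M) / ‖z‖ ^ s)
        ≤ ∫⁻ z in ball (0 : EuclideanSpace ℝ (Fin n)) R,
          ENNReal.ofReal (L / R) * ENNReal.ofReal (‖z‖ ^ (-((n:ℝ) - 1 + 2 * α))) := by
          refine lintegral_mono fun z => ?_
          rw [← ENNReal.ofReal_mul (by positivity)]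
          exact hpt z
      _ = ENNReal.ofReal (L / R) * ∫⁻ z in ball (0 : EuclideanSpace ℝ (Fin n)) R,
          ENNReal.ofReal (‖z‖ ^ (-((n:ℝ) - 1 + 2 * α))) := by
          rw [lintegral_const_mul]
          exact ENNReal.measurable_ofReal.comp (by fun_prop)
      _ ≤ ENNReal.ofReal (L / R) * (ENNReal.ofReal (R ^ ((n:ℝ) - ((n:ℝ) - 1 + 2 * α))) * c₁) := by
          gcongr
          exact hc₁ R hR
      _ = ENNReal.ofReal (R ^ (-(2*α))) * (ENNReal.ofReal L * c₁) := by
          have hreal : L / R * R ^ ((n:ℝ) - ((n:ℝ) - 1 + 2 * α)) = R ^ (-(2*α)) * L := by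
            rw [show ((n:ℝ) - ((n:ℝ) - 1 + 2 * α)) = 1 - 2*α by ring,
              Real.rpow_sub hR, Real.rpow_one, Real.rpow_neg hR.le]
            field_simp
          rw [← mul_assoc, ← mul_assoc, ← ENNReal.ofReal_mul (by positivity), hreal,
            ENNReal.ofReal_mul (by positivity)]
  have hcompl : ∫⁻ z in (ball (0 : EuclideanSpace ℝ (Fin n)) R)ᶜ,
      ENNReal.ofReal (min (L * ‖z‖ / R) (2 * M) / ‖z‖ ^ s) ≤
      ENNReal.ofReal (R ^ (-(2*α))) * (ENNReal.ofReal (2 * M) * c₂) := by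
    have hpt : ∀ z : EuclideanSpace ℝ (Fin n),
        ENNReal.ofReal (min (L * ‖z‖ / R) (2 * M) / ‖z‖ ^ s) ≤
        ENNReal.ofReal ((2 * M) * ‖z‖ ^ (-s)) := by
      intro z
      apply ENNReal.ofReal_le_ofReal
      calc min (L * ‖z‖ / R) (2 * M) / ‖z‖ ^ s ≤ (2 * M) / ‖z‖ ^ s :=
            div_le_div_of_nonneg_right (min_le_right _ _) (by positivity)
        _ = (2 * M) * ‖z‖ ^ (-s) := by
            rw [Real.rpow_neg (norm_nonneg z), div_eq_mul_inv]
    calc ∫⁻ z in (ball (0 : EuclideanSpace ℝ (Fin n)) R)ᶜ,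
          ENNReal.ofReal (min (L * ‖z‖ / R) (2 * M) / ‖z‖ ^ s)
        ≤ ∫⁻ z in (ball (0 : EuclideanSpace ℝ (Fin n)) R)ᶜ,
          ENNReal.ofReal (2 * M) * ENNReal.ofReal (‖z‖ ^ (-s)) := by
          refine lintegral_mono fun z => ?_
          rw [← ENNReal.ofReal_mul (by positivity)]
          exact hpt z
      _ = ENNReal.ofReal (2 * M) * ∫⁻ z in (ball (0 : EuclideanSpace ℝ (Fin n)) R)ᶜ,
          ENNReal.ofReal (‖z‖ ^ (-s)) := by
          rw [lintegral_const_mul]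
          exact ENNReal.measurable_ofReal.comp (by fun_prop)
      _ ≤ ENNReal.ofReal (2 * M) * (ENNReal.ofReal (R ^ ((n:ℝ) - s)) * c₂) := by
          gcongr
          exact hc₂ R hR
      _ = ENNReal.ofReal (R ^ (-(2*α))) * (ENNReal.ofReal (2 * M) * c₂) := by
          rw [show (n:ℝ) - s = -(2*α) by rw [hs]; ring]
          ring
  calc (∫⁻ z in ball (0 : EuclideanSpace ℝ (Fin n)) R,
        ENNReal.ofReal (min (L * ‖z‖ / R) (2 * M) / ‖z‖ ^ s)) +
      ∫⁻ z in (ball (0 : EuclideanSpace ℝ (Fin n)) R)ᶜ,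
        ENNReal.ofReal (min (L * ‖z‖ / R) (2 * M) / ‖z‖ ^ s)
      ≤ ENNReal.ofReal (R ^ (-(2*α))) * (ENNReal.ofReal L * c₁) +
        ENNReal.ofReal (R ^ (-(2*α))) * (ENNReal.ofReal (2 * M) * c₂) := add_le_add hball hcompl
    _ = ENNReal.ofReal (R ^ (-(2*α))) * (ENNReal.ofReal L * c₁ + ENNReal.ofReal (2 * M) * c₂) :=
        (mul_add _ _ _).symm
    _ ≤ ENNReal.ofReal (R ^ (-(2 * α))) * (ENNReal.ofReal (M + L) * (c₁ + 2 * c₂)) := by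
        refine mul_le_mul_right ?_ _
        rw [mul_add]
        refine add_le_add ?_ ?_
        · exact mul_le_mul_left (ENNReal.ofReal_le_ofReal (by linarith)) _
        · have h2M : ENNReal.ofReal (2 * M) * c₂ = ENNReal.ofReal M * (2 * c₂) := by
            rw [ENNReal.ofReal_mul (by norm_num), ENNReal.ofReal_ofNat]
            ring
          rw [h2M]
          exact mul_le_mul_left (ENNReal.ofReal_le_ofReal (by linarith)) _

theorem commutator_L1_estimate (n : ℕ) (hn : 1 ≤ n) (α : ℝ)
    (hα : 0 < α) (hα' : α < 1 / 2) :
    ∃ C : ℝ, 0 < C ∧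
      ∀ (ϕ : EuclideanSpace ℝ (Fin n) → ℝ) (L M : ℝ), 0 ≤ L →
        LipschitzWith (Real.toNNReal L) ϕ → (∀ x, |ϕ x| ≤ M) →
        ∀ (R : ℝ), 0 < R →
        ∀ (A : EuclideanSpace ℝ (Fin n) → ℝ), Measurable A → Integrable A →
          ∫⁻ x : EuclideanSpace ℝ (Fin n), ∫⁻ y : EuclideanSpace ℝ (Fin n),
              ENNReal.ofReal (|ϕ (R⁻¹ • x) - ϕ (R⁻¹ • y)| * |A y| /
                ‖x - y‖ ^ ((n : ℝ) + 2 * α)) ≤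
            ENNReal.ofReal (C * (M + L) * R ^ (-(2 * α)) *
              ∫ y : EuclideanSpace ℝ (Fin n), |A y|) := by
  obtain ⟨c, hctop, hc⟩ := kernel_bound n hn α hα hα'
  have hC0 : (0:ℝ) ≤ c.toReal := ENNReal.toReal_nonneg
  refine ⟨c.toReal + 1, by positivity, ?_⟩
  intro ϕ L M hL hLip hM R hR A hA hAint
  have hM0 : 0 ≤ M := le_trans (abs_nonneg _) (hM 0)
  set s : ℝ := (n:ℝ) + 2*α with hs
  set g : EuclideanSpace ℝ (Fin n) → ℝ≥0∞ :=
    fun z => ENNReal.ofReal (min (L * ‖z‖ / R) (2 * M) / ‖z‖ ^ s) with hg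
  have hgmeas : Measurable g := ENNReal.measurable_ofReal.comp (by fun_prop)
  have hpt : ∀ x y : EuclideanSpace ℝ (Fin n),
      ENNReal.ofReal (|ϕ (R⁻¹ • x) - ϕ (R⁻¹ • y)| * |A y| / ‖x - y‖ ^ s) ≤
      g (x - y) * ENNReal.ofReal |A y| := by
    intro x y
    rw [mul_div_right_comm, ENNReal.ofReal_mul (by positivity), hg]
    refine mul_le_mul_left (ENNReal.ofReal_le_ofReal ?_) _
    refine div_le_div_of_nonneg_right ?_ (by positivity)
    refine le_min ?_ ?_
    · have hlip := hLip.dist_le_mul (R⁻¹ • x) (R⁻¹ • y)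
      rw [Real.dist_eq] at hlip
      have hd : dist (R⁻¹ • x) (R⁻¹ • y) = ‖x - y‖ / R := by
        rw [dist_eq_norm, ← smul_sub, norm_smul, norm_inv, Real.norm_eq_abs,
          abs_of_pos hR, inv_mul_eq_div]
      rw [hd] at hlip
      calc |ϕ (R⁻¹ • x) - ϕ (R⁻¹ • y)| ≤ L * (‖x - y‖ / R) := by
            simpa [Real.coe_toNNReal L hL] using hlip
        _ = L * ‖x - y‖ / R := (mul_div_assoc _ _ _).symm
    · calc |ϕ (R⁻¹ • x) - ϕ (R⁻¹ • y)| ≤ |ϕ (R⁻¹ • x)| + |ϕ (R⁻¹ • y)| := abs_sub _ _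
        _ ≤ M + M := add_le_add (hM _) (hM _)
        _ = 2 * M := by ring
  have hmeasG : Measurable fun p : EuclideanSpace ℝ (Fin n) × EuclideanSpace ℝ (Fin n) =>
      g (p.1 - p.2) * ENNReal.ofReal |A p.2| :=
    (hgmeas.comp (measurable_fst.sub measurable_snd)).mul
      (ENNReal.measurable_ofReal.comp ((hA.comp measurable_snd).abs))
  have hAmeas : Measurable fun y => ENNReal.ofReal |A y| :=
    ENNReal.measurable_ofReal.comp hA.abs
  calc ∫⁻ x : EuclideanSpace ℝ (Fin n), ∫⁻ y : EuclideanSpace ℝ (Fin n),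
        ENNReal.ofReal (|ϕ (R⁻¹ • x) - ϕ (R⁻¹ • y)| * |A y| / ‖x - y‖ ^ s)
      ≤ ∫⁻ x : EuclideanSpace ℝ (Fin n), ∫⁻ y : EuclideanSpace ℝ (Fin n),
        g (x - y) * ENNReal.ofReal |A y| :=
        lintegral_mono fun x => lintegral_mono fun y => hpt x y
    _ = ∫⁻ y : EuclideanSpace ℝ (Fin n), ∫⁻ x : EuclideanSpace ℝ (Fin n),
        g (x - y) * ENNReal.ofReal |A y| := lintegral_lintegral_swap hmeasG.aemeasurable
    _ = ∫⁻ y : EuclideanSpace ℝ (Fin n), (∫⁻ x : EuclideanSpace ℝ (Fin n),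
        g (x - y)) * ENNReal.ofReal |A y| := by
        refine lintegral_congr fun y => ?_
        exact lintegral_mul_const _ (hgmeas.comp (measurable_id.sub measurable_const))
    _ = ∫⁻ y : EuclideanSpace ℝ (Fin n), (∫⁻ z : EuclideanSpace ℝ (Fin n), g z) *
        ENNReal.ofReal |A y| := by
        refine lintegral_congr fun y => ?_
        congr 1
        exact lintegral_sub_right_eq_self g y
    _ = (∫⁻ z : EuclideanSpace ℝ (Fin n), g z) *
        ∫⁻ y : EuclideanSpace ℝ (Fin n), ENNReal.ofReal |A y| :=
        lintegral_const_mul _ hAmeas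
    _ ≤ (ENNReal.ofReal (R ^ (-(2 * α))) * (ENNReal.ofReal (M + L) * c)) *
        ∫⁻ y : EuclideanSpace ℝ (Fin n), ENNReal.ofReal |A y| :=
        mul_le_mul_left (hc L M R hL hM0 hR) _
    _ = (ENNReal.ofReal (R ^ (-(2 * α))) * (ENNReal.ofReal (M + L) * c)) *
        ENNReal.ofReal (∫ y : EuclideanSpace ℝ (Fin n), |A y|) := by
        rw [ofReal_integral_eq_lintegral_ofReal hAint.abs (ae_of_all _ fun y => abs_nonneg _)]
    _ ≤ ENNReal.ofReal ((c.toReal + 1) * (M + L) * R ^ (-(2 * α)) *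
        ∫ y : EuclideanSpace ℝ (Fin n), |A y|) := by
        have hInt0 : 0 ≤ ∫ y : EuclideanSpace ℝ (Fin n), |A y| :=
          integral_nonneg fun y => abs_nonneg _
        have hcle : c ≤ ENNReal.ofReal (c.toReal + 1) := by
          exact le_trans (le_of_eq (ENNReal.ofReal_toReal hctop).symm)
            (ENNReal.ofReal_le_ofReal (by linarith))
        rw [ENNReal.ofReal_mul (by positivity), ENNReal.ofReal_mul (by positivity),
          ENNReal.ofReal_mul (by positivity)]
        calc (ENNReal.ofReal (R ^ (-(2 * α))) * (ENNReal.ofReal (M + L) * c)) *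
              ENNReal.ofReal (∫ y : EuclideanSpace ℝ (Fin n), |A y|)
            ≤ (ENNReal.ofReal (R ^ (-(2 * α))) *
              (ENNReal.ofReal (M + L) * ENNReal.ofReal (c.toReal + 1))) *
              ENNReal.ofReal (∫ y : EuclideanSpace ℝ (Fin n), |A y|) := by
              gcongr
          _ = ENNReal.ofReal (c.toReal + 1) * ENNReal.ofReal (M + L) *
              ENNReal.ofReal (R ^ (-(2 * α))) *
              ENNReal.ofReal (∫ y : EuclideanSpace ℝ (Fin n), |A y|) := by ring
end
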